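/- Let s be a positive integer, let K be a complex Hadamard matrix of order s+1 that is normalized (all entries of its first row equal 1), and let T be the s×(s+1) matrix consisting of the s noninitial rows of K. Let X, Y be s×s matrices and D an (s+1)×(s+1) matrix with unimodular entries such that the Petrescu array H = [[X, Y, T], [Y, X, T], [T*, T*, D]] is a complex Hadamard matrix of order 3s+1. Then D commutes with the all-ones matrix: D J_{s+1} = J_{s+1} D; that is, D is a regular matrix (all its row sums and column sums are equal to a common value). -/

import Mathlib

open Matrix

/-- Petrescu's array: the `(3s+1) × (3s+1)` block matrix
`[[X, Y, T], [Y, X, T], [Tᴴ, Tᴴ, D]]`. -/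
def petrescuArray {s : ℕ} (X Y : Matrix (Fin s) (Fin s) ℂ)
    (T : Matrix (Fin s) (Fin (s + 1)) ℂ) (D : Matrix (Fin (s + 1)) (Fin (s + 1)) ℂ) :
    Matrix ((Fin s ⊕ Fin s) ⊕ Fin (s + 1)) ((Fin s ⊕ Fin s) ⊕ Fin (s + 1)) ℂ :=
  Matrix.fromBlocks (Matrix.fromBlocks X Y Y X) (Matrix.fromRows T T)
    (Matrix.fromCols Tᴴ Tᴴ) D

/-- The `m × m` all-ones matrix. -/
def allOnes (m : ℕ) : Matrix (Fin m) (Fin m) ℂ := Matrix.of fun _ _ => 1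

/-- From `M * Mᴴ = c • 1` with `c ≠ 0` deduce `Mᴴ * M = c • 1`. -/
lemma conjTranspose_mul_self_of_self_mul_conjTranspose {n : Type*} [Fintype n] [DecidableEq n]
    (M : Matrix n n ℂ) (c : ℂ) (hc : c ≠ 0) (h : M * Mᴴ = c • 1) : Mᴴ * M = c • 1 := by
  have h1 : M * (c⁻¹ • Mᴴ) = 1 := by
    rw [Matrix.mul_smul, h, smul_smul, inv_mul_cancel₀ hc, one_smul]
  have h2 : (c⁻¹ • Mᴴ) * M = 1 := mul_eq_one_comm.mp h1
  rw [Matrix.smul_mul] at h2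
  calc Mᴴ * M = c • (c⁻¹ • (Mᴴ * M)) := by rw [smul_smul, mul_inv_cancel₀ hc, one_smul]
    _ = c • 1 := by rw [h2]

/-- If Petrescu's array built from the noninitial rows `T` of a normalized complex
Hadamard matrix of order `s+1` and unimodular `X, Y, D` is a complex Hadamard
matrix of order `3s+1`, then `D` commutes with the all-ones matrix; that is, `D`
is regular: all its row sums and column sums equal a common value. -/
theorem petrescu_D_regular (s : ℕ) (hs : 0 < s)
    (K : Matrix (Fin (s + 1)) (Fin (s + 1)) ℂ)
    (hKuni : ∀ i j, ‖K i j‖ = 1)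
    (hKhad : K * Kᴴ = ((s + 1 : ℕ) : ℂ) • 1)
    (hKnorm : ∀ j, K 0 j = 1)
    (T : Matrix (Fin s) (Fin (s + 1)) ℂ)
    (hT : ∀ (i : Fin s) (j : Fin (s + 1)), T i j = K i.succ j)
    (X Y : Matrix (Fin s) (Fin s) ℂ)
    (D : Matrix (Fin (s + 1)) (Fin (s + 1)) ℂ)
    (hX : ∀ i j, ‖X i j‖ = 1)
    (hY : ∀ i j, ‖Y i j‖ = 1)
    (hD : ∀ i j, ‖D i j‖ = 1)
    (hHuni : ∀ i j, ‖petrescuArray X Y T D i j‖ = 1)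
    (hHhad : petrescuArray X Y T D * (petrescuArray X Y T D)ᴴ =
      ((3 * s + 1 : ℕ) : ℂ) • 1) :
    D * allOnes (s + 1) = allOnes (s + 1) * D ∧
      ∃ c : ℂ, (∀ i, ∑ j, D i j = c) ∧ (∀ j, ∑ i, D i j = c) := by
  -- `Kᴴ * K = (s+1) • 1`
  have hs1 : ((s + 1 : ℕ) : ℂ) ≠ 0 := Nat.cast_ne_zero.mpr (Nat.succ_ne_zero s)
  have hKhad' : Kᴴ * K = ((s + 1 : ℕ) : ℂ) • 1 :=
    conjTranspose_mul_self_of_self_mul_conjTranspose K _ hs1 hKhad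
  -- `Tᴴ * T = (s+1) • 1 - J`
  have hTT : Tᴴ * T = ((s + 1 : ℕ) : ℂ) • 1 - allOnes (s + 1) := by
    ext a b
    have hK : (Kᴴ * K) a b = ((s + 1 : ℕ) : ℂ) • (1 : Matrix (Fin (s+1)) (Fin (s+1)) ℂ) a b := by
      rw [hKhad']; rfl
    rw [Matrix.mul_apply] at hK
    rw [Fin.sum_univ_succ] at hK
    have h0 : Kᴴ a 0 * K 0 b = 1 := by
      simp [Matrix.conjTranspose_apply, hKnorm]
    rw [h0] at hK
    have hrest : ∑ i : Fin s, Kᴴ a i.succ * K i.succ b = (Tᴴ * T) a b := by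
      rw [Matrix.mul_apply]
      refine Finset.sum_congr rfl fun i _ => ?_
      simp [Matrix.conjTranspose_apply, hT]
    rw [hrest] at hK
    have : (Tᴴ * T) a b = ((s + 1 : ℕ) : ℂ) • (1 : Matrix (Fin (s+1)) (Fin (s+1)) ℂ) a b - 1 := by
      linear_combination hK
    rw [this]
    simp [allOnes, Matrix.sub_apply, Matrix.smul_apply]
  -- the Hadamard condition in the other order
  have hn : ((3 * s + 1 : ℕ) : ℂ) ≠ 0 := Nat.cast_ne_zero.mpr (Nat.succ_ne_zero (3 * s))
  have hHhad' : (petrescuArray X Y T D)ᴴ * petrescuArray X Y T D =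
      ((3 * s + 1 : ℕ) : ℂ) • 1 :=
    conjTranspose_mul_self_of_self_mul_conjTranspose _ _ hn hHhad
  set A : Matrix (Fin s ⊕ Fin s) (Fin s ⊕ Fin s) ℂ := Matrix.fromBlocks X Y Y X with hA
  set n : ℂ := ((3 * s + 1 : ℕ) : ℂ) with hn'
  -- rewrite both Hadamard equations in block form
  have hPET : petrescuArray X Y T D =
      Matrix.fromBlocks A (Matrix.fromRows T T) (Matrix.fromCols Tᴴ Tᴴ) D := rfl
  have hPETH : (petrescuArray X Y T D)ᴴ =
      Matrix.fromBlocks Aᴴ (Matrix.fromCols Tᴴ Tᴴ)ᴴ (Matrix.fromRows T T)ᴴ Dᴴ := by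
    rw [hPET, Matrix.fromBlocks_conjTranspose]
  have hRHS : (n • (1 : Matrix ((Fin s ⊕ Fin s) ⊕ Fin (s + 1))
      ((Fin s ⊕ Fin s) ⊕ Fin (s + 1)) ℂ)) =
      Matrix.fromBlocks (n • 1) 0 0 (n • 1) := by
    rw [← Matrix.fromBlocks_one, Matrix.fromBlocks_smul]
    simp
  -- block (2,1) of H * Hᴴ = n • 1
  have e1 : Matrix.fromCols Tᴴ Tᴴ * Aᴴ + D * (Matrix.fromRows T T)ᴴ = 0 := by
    have := hHhad
    rw [hPETH, hPET, Matrix.fromBlocks_multiply, hRHS] at this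
    exact (Matrix.fromBlocks_inj.mp this).2.2.1
  -- block (2,1) of Hᴴ * H = n • 1
  have e2 : (Matrix.fromRows T T)ᴴ * A + Dᴴ * Matrix.fromCols Tᴴ Tᴴ = 0 := by
    have := hHhad'
    rw [hPETH, hPET, Matrix.fromBlocks_multiply, hRHS] at this
    exact (Matrix.fromBlocks_inj.mp this).2.2.1
  have hRT : (Matrix.fromRows T T)ᴴ = Matrix.fromCols Tᴴ Tᴴ :=
    Matrix.conjTranspose_fromRows_eq_fromCols_conjTranspose T T
  have hAH : Aᴴ = Matrix.fromBlocks Xᴴ Yᴴ Yᴴ Xᴴ := by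
    rw [hA, Matrix.fromBlocks_conjTranspose]
  -- extract scalar block equations
  have f1 : Tᴴ * Xᴴ + Tᴴ * Yᴴ + D * Tᴴ = 0 := by
    rw [hRT, hAH, Matrix.fromCols_mul_fromBlocks, Matrix.mul_fromCols] at e1
    have : Matrix.fromCols (Tᴴ * Xᴴ + Tᴴ * Yᴴ + D * Tᴴ) (Tᴴ * Yᴴ + Tᴴ * Xᴴ + D * Tᴴ) =
        Matrix.fromCols (0 : Matrix (Fin (s+1)) (Fin s) ℂ) 0 := by
      rw [Matrix.fromCols_zero]
      rw [← e1]
      ext i (j | j) <;> simp [Matrix.fromCols, Matrix.add_apply]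
    exact (Matrix.fromCols_inj this).1
  have f2 : Tᴴ * X + Tᴴ * Y + Dᴴ * Tᴴ = 0 := by
    rw [hRT, hA, Matrix.fromCols_mul_fromBlocks, Matrix.mul_fromCols] at e2
    have : Matrix.fromCols (Tᴴ * X + Tᴴ * Y + Dᴴ * Tᴴ) (Tᴴ * Y + Tᴴ * X + Dᴴ * Tᴴ) =
        Matrix.fromCols (0 : Matrix (Fin (s+1)) (Fin s) ℂ) 0 := by
      rw [Matrix.fromCols_zero]
      rw [← e2]
      ext i (j | j) <;> simp [Matrix.fromCols, Matrix.add_apply]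
    exact (Matrix.fromCols_inj this).1
  -- conjTranspose of f2 : Xᴴ * T + Yᴴ * T + T * D = 0
  have f2' : Xᴴ * T + Yᴴ * T + T * D = 0 := by
    have := congrArg Matrix.conjTranspose f2
    simpa [Matrix.conjTranspose_add, Matrix.conjTranspose_mul] using this
  -- D * (Tᴴ T) = (Tᴴ T) * D
  have key : D * (Tᴴ * T) = (Tᴴ * T) * D := by
    have g1 : Tᴴ * Xᴴ * T + Tᴴ * Yᴴ * T + D * (Tᴴ * T) = 0 := by
      have := congrArg (fun M => M * T) f1
      simpa [Matrix.add_mul, Matrix.mul_assoc] using this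
    have g2 : Tᴴ * Xᴴ * T + Tᴴ * Yᴴ * T + (Tᴴ * T) * D = 0 := by
      have := congrArg (fun M => Tᴴ * M) f2'
      simpa [Matrix.mul_add, Matrix.mul_assoc] using this
    have := g1.trans g2.symm
    exact add_left_cancel this
  -- conclude D J = J D
  have hDJ : D * allOnes (s + 1) = allOnes (s + 1) * D := by
    rw [hTT] at key
    rw [Matrix.mul_sub, Matrix.sub_mul, Matrix.mul_smul, Matrix.smul_mul,
      Matrix.mul_one, Matrix.one_mul] at key
    exact sub_right_injective key
  refine ⟨hDJ, ∑ k, D k 0, ?_, ?_⟩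
  · intro i
    have := congrFun (congrFun hDJ i) 0
    simpa [Matrix.mul_apply, allOnes] using this
  · intro j
    have h1 := congrFun (congrFun hDJ 0) j
    have h2 := congrFun (congrFun hDJ 0) 0
    simp only [Matrix.mul_apply, allOnes, Matrix.of_apply, one_mul, mul_one] at h1 h2
    rw [← h1, h2]
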